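/- Let A be an n×n Metzler matrix. If A is Hurwitz stable then A is invertible and every entry of A⁻¹ is nonpositive. -/

import Mathlib

open Matrix NormedSpace


attribute [local instance] Matrix.linftyOpNormedRing Matrix.linftyOpNormedAlgebra

section aux
variable {n : ℕ}

lemma entry_mul_nonneg {M N : Matrix (Fin n) (Fin n) ℝ}
    (hM : ∀ i j, 0 ≤ M i j) (hN : ∀ i j, 0 ≤ N i j) : ∀ i j, 0 ≤ (M * N) i j := by
  intro i j
  rw [Matrix.mul_apply]
  exact Finset.sum_nonneg fun k _ => mul_nonneg (hM i k) (hN k j)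

lemma entry_pow_nonneg {M : Matrix (Fin n) (Fin n) ℝ}
    (hM : ∀ i j, 0 ≤ M i j) : ∀ (k : ℕ) (i j : Fin n), 0 ≤ (M ^ k) i j := by
  intro k
  induction k with
  | zero => intro i j; simp [Matrix.one_apply]; split <;> norm_num
  | succ k ih => rw [pow_succ]; exact entry_mul_nonneg ih hM

lemma entry_tsum (i j : Fin n) (f : ℕ → Matrix (Fin n) (Fin n) ℝ) (hf : Summable f) :
    (∑' k, f k) i j = ∑' k, f k i j := by
  let e : Matrix (Fin n) (Fin n) ℝ →ₗ[ℝ] ℝ :=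
    { toFun := fun M => M i j, map_add' := fun _ _ => rfl, map_smul' := fun _ _ => rfl }
  exact (LinearMap.toContinuousLinearMap e).map_tsum hf

lemma norm_map_ofReal (M : Matrix (Fin n) (Fin n) ℝ) :
    ‖M.map (algebraMap ℝ ℂ)‖₊ = ‖M‖₊ := by
  simp [Matrix.linfty_opNNNorm_def]
end aux


/-- A Hurwitz stable Metzler matrix is invertible with entrywise nonpositive inverse. -/
theorem metzler_hurwitz_inv_nonpos (n : ℕ) (A : Matrix (Fin n) (Fin n) ℝ)
    (hA : ∀ i j, i ≠ j → 0 ≤ A i j)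
    (hHur : ∀ μ ∈ spectrum ℂ (A.map (algebraMap ℝ ℂ)), μ.re < 0) :
    IsUnit A ∧ ∀ i j, A⁻¹ i j ≤ 0 := by
  rcases Nat.eq_zero_or_pos n with hn | hn
  · subst hn
    refine ⟨?_, fun i => i.elim0⟩
    have : A = 1 := Subsingleton.elim _ _
    rw [this]; exact isUnit_one
  haveI : Nonempty (Fin n) := ⟨⟨0, hn⟩⟩
  haveI : CompleteSpace (Matrix (Fin n) (Fin n) ℂ) := FiniteDimensional.complete ℂ _
  haveI : CompleteSpace (Matrix (Fin n) (Fin n) ℝ) := FiniteDimensional.complete ℝ _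
  set Ac := A.map (algebraMap ℝ ℂ) with hAcdef
  have hK : IsCompact (spectrum ℂ Ac) := spectrum.isCompact Ac
  have hKne : (spectrum ℂ Ac).Nonempty := spectrum.nonempty Ac
  -- the function g
  set g : ℂ → ℝ := fun μ => ‖μ‖^2 / (-(2 * μ.re)) with hgdef
  have hgc : ContinuousOn g (spectrum ℂ Ac) := by
    apply ContinuousOn.div
    · exact (continuous_norm.pow 2).continuousOn
    · exact (continuous_const.mul Complex.continuous_re).neg.continuousOn
    · intro μ hμ
      have := hHur μ hμ
      intro h
      nlinarith [this]
  obtain ⟨μ₀, hμ₀K, hμ₀max⟩ := hK.exists_isMaxOn hKne hgc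
  set s : ℝ := max (g μ₀) (Finset.univ.sup' Finset.univ_nonempty (fun i => -A i i)) + 1 with hsdef
  have hg0 : 0 ≤ g μ₀ := by
    have := hHur μ₀ hμ₀K
    apply div_nonneg (by positivity)
    nlinarith
  have hs0 : 0 < s := by
    have h := le_max_left (g μ₀) (Finset.univ.sup' Finset.univ_nonempty (fun i => -A i i))
    rw [hsdef]; linarith
  have hsdiag : ∀ i, -A i i < s := by
    intro i
    have : -A i i ≤ Finset.univ.sup' Finset.univ_nonempty (fun i => -A i i) :=
      Finset.le_sup' (fun i => -A i i) (Finset.mem_univ i)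
    have h2 := le_max_right (g μ₀) (Finset.univ.sup' Finset.univ_nonempty (fun i => -A i i))
    linarith
  have hsg : ∀ μ ∈ spectrum ℂ Ac, g μ < s := by
    intro μ hμ
    have h3 : g μ ≤ g μ₀ := hμ₀max hμ
    have h2 := le_max_left (g μ₀) (Finset.univ.sup' Finset.univ_nonempty (fun i => -A i i))
    linarith
  have hsne : (s:ℝ) ≠ 0 := ne_of_gt hs0
  set C : Matrix (Fin n) (Fin n) ℝ := (1/s) • (A + s • 1) with hCdef
  have hC : ∀ i j, 0 ≤ C i j := by
    intro i j
    rw [hCdef]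
    by_cases h : i = j
    · subst h
      simp [Matrix.add_apply, Matrix.one_apply]
      have := hsdiag i
      have h1 : (0:ℝ) ≤ A i i + s := by linarith
      positivity
    · simp [Matrix.smul_apply, Matrix.add_apply, Matrix.one_apply, h]
      have := hA i j h
      positivity
  have hsne' : (s:ℂ) ≠ 0 := by exact_mod_cast hsne
  set Cc : Matrix (Fin n) (Fin n) ℂ := (1/(s:ℂ)) • (Ac + (s:ℂ) • 1) with hCcdef
  have hCcmap : Cc = C.map (algebraMap ℝ ℂ) := by
    ext i j
    by_cases h : i = j <;>
      simp [hCcdef, hCdef, hAcdef, Matrix.smul_apply, Matrix.add_apply, Matrix.one_apply,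
        Matrix.map_apply, h] <;> push_cast <;> ring
  have hsC : ∀ z ∈ spectrum ℂ Cc, ‖z‖ < 1 := by
    intro z hz
    have key : ((s:ℂ) * (z - 1)) ∈ spectrum ℂ Ac := by
      rw [spectrum.mem_iff] at hz ⊢
      intro hu
      apply hz
      have heq : algebraMap ℂ (Matrix (Fin n) (Fin n) ℂ) z - Cc
          = ((1/(s:ℂ)) • (1 : Matrix (Fin n) (Fin n) ℂ))
            * (algebraMap ℂ (Matrix (Fin n) (Fin n) ℂ) ((s:ℂ)*(z-1)) - Ac) := by
        have e1 : (1/(s:ℂ)) * ((s:ℂ)*(z-1)) = z - 1 := by field_simp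
        have e2 : (1/(s:ℂ)) * (s:ℂ) = 1 := by field_simp
        rw [Algebra.algebraMap_eq_smul_one, Algebra.algebraMap_eq_smul_one, hCcdef,
          Matrix.smul_mul, one_mul, smul_sub, smul_add, smul_smul, smul_smul, e1, e2,
          sub_smul, one_smul]
        abel
      rw [heq]
      refine IsUnit.mul ?_ hu
      rw [Matrix.isUnit_iff_isUnit_det, Matrix.det_smul, Matrix.det_one]
      simp [hsne']
    set μ := (s:ℂ) * (z - 1) with hμdef
    have hre := hHur μ key
    have hlt := hsg μ key
    have hd : (0:ℝ) < -(2*μ.re) := by linarith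
    have h1 : ‖μ‖^2 < s * -(2*μ.re) := (div_lt_iff₀ hd).mp hlt
    have e0 : ‖μ‖^2 = μ.re^2 + μ.im^2 := by
      rw [Complex.sq_norm, Complex.normSq_apply]; ring
    have e1 : ‖μ + (s:ℂ)‖^2 = (μ.re + s)^2 + μ.im^2 := by
      rw [Complex.sq_norm, Complex.normSq_apply]
      simp [Complex.add_re, Complex.add_im]
      ring
    have hfin : ‖μ + (s:ℂ)‖ < s := by nlinarith [norm_nonneg (μ + (s:ℂ))]
    have hzeq : z = (μ + s)/s := by
      rw [hμdef]; field_simp; ring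
    rw [hzeq, norm_div]
    have hns : ‖(s:ℂ)‖ = s := by
      rw [Complex.norm_real, Real.norm_eq_abs]; exact abs_of_pos hs0
    rw [hns]
    exact (div_lt_one hs0).mpr hfin
  have hrad : spectralRadius ℂ Cc < 1 := by
    obtain ⟨z₀, hz₀K, hz₀max⟩ :=
      (spectrum.isCompact Cc).exists_isMaxOn (spectrum.nonempty Cc) continuous_norm.continuousOn
    have hle : spectralRadius ℂ Cc ≤ (‖z₀‖₊ : ENNReal) := by
      rw [spectralRadius]
      refine iSup₂_le fun z hz => ?_
      exact_mod_cast (hz₀max hz : ‖z‖ ≤ ‖z₀‖)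
    refine lt_of_le_of_lt hle ?_
    rw [← ENNReal.coe_one, ENNReal.coe_lt_coe]
    exact_mod_cast hsC z₀ hz₀K
  have hev : ∀ᶠ m : ℕ in Filter.atTop, ((‖Cc ^ m‖₊ : ENNReal) ^ (1/(m:ℝ)) < 1) :=
    (spectrum.pow_nnnorm_pow_one_div_tendsto_nhds_spectralRadius Cc).eventually_lt_const hrad
  obtain ⟨m, hm1, hm2⟩ := (hev.and (Filter.eventually_ge_atTop 1)).exists
  have hmlt : (‖Cc ^ m‖₊ : ENNReal) < 1 := by
    by_contra hcon
    push_neg at hcon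
    have : (1:ENNReal) ≤ (‖Cc ^ m‖₊ : ENNReal) ^ (1/(m:ℝ)) := by
      calc (1:ENNReal) = 1 ^ (1/(m:ℝ)) := (ENNReal.one_rpow _).symm
      _ ≤ _ := ENNReal.rpow_le_rpow hcon (by positivity)
    exact absurd hm1 (not_lt.mpr this)
  have hCm : ‖C ^ m‖ < 1 := by
    have e : Cc ^ m = (C ^ m).map (algebraMap ℝ ℂ) := by
      rw [hCcmap]
      exact (map_pow ((algebraMap ℝ ℂ).mapMatrix) C m).symm
    have := hmlt
    rw [e] at this
    rw [norm_map_ofReal] at this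
    rw [← ENNReal.coe_one, ENNReal.coe_lt_coe] at this
    exact_mod_cast this
  set u := Units.oneSub (C^m) hCm with hudef
  have hsum : Summable (fun k => (C^m)^k) := summable_geometric_of_norm_lt_one hCm
  have huinv : (↑u⁻¹ : Matrix (Fin n) (Fin n) ℝ) = ∑' k, (C^m)^k := rfl
  have huinvnn : ∀ i j, 0 ≤ (↑u⁻¹ : Matrix (Fin n) (Fin n) ℝ) i j := by
    intro i j
    rw [huinv, entry_tsum i j _ hsum]
    exact tsum_nonneg fun k => entry_pow_nonneg (fun a b => entry_pow_nonneg hC m a b) k i j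
  set S : Matrix (Fin n) (Fin n) ℝ := ∑ k ∈ Finset.range m, C^k with hSdef
  have hSnn : ∀ i j, 0 ≤ S i j := by
    intro i j
    rw [hSdef, Matrix.sum_apply]
    exact Finset.sum_nonneg fun k _ => entry_pow_nonneg hC k i j
  have hgeom : S * (1 - C) = 1 - C^m := by
    have h2 : S * (C - 1) = C^m - 1 := geom_sum_mul C m
    calc S * (1 - C) = -(S * (C - 1)) := by rw [← mul_neg, neg_sub]
    _ = -(C^m - 1) := by rw [h2]
    _ = 1 - C^m := neg_sub _ _
  have hBleft : ((↑u⁻¹ : Matrix (Fin n) (Fin n) ℝ) * S) * (1 - C) = 1 := by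
    rw [mul_assoc, hgeom]
    exact u.inv_mul
  have h1C : (1 : Matrix (Fin n) (Fin n) ℝ) - C = (-(1/s)) • A := by
    rw [hCdef, smul_add, smul_smul]
    have e2 : (1/s) * s = 1 := by field_simp
    rw [e2, one_smul, neg_smul]
    abel
  set D := (-(1/s)) • ((↑u⁻¹ : Matrix (Fin n) (Fin n) ℝ) * S) with hDdef
  have hDA : D * A = 1 := by
    have hA' : A = (-s) • ((1:Matrix (Fin n) (Fin n) ℝ) - C) := by
      rw [h1C, smul_smul]
      have e3 : (-s) * (-(1/s)) = 1 := by field_simp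
      rw [e3, one_smul]
    rw [hDdef, hA', Matrix.smul_mul, Matrix.mul_smul, smul_smul, hBleft]
    have e4 : (-(1/s)) * (-s) = 1 := by field_simp
    rw [e4, one_smul]
  refine ⟨(Matrix.isUnit_iff_isUnit_det A).mpr (Matrix.isUnit_det_of_left_inverse hDA), ?_⟩
  intro i j
  rw [Matrix.inv_eq_left_inv hDA, hDdef, Matrix.smul_apply, smul_eq_mul]
  have hnn : 0 ≤ ((↑u⁻¹ : Matrix (Fin n) (Fin n) ℝ) * S) i j := entry_mul_nonneg huinvnn hSnn i j
  have hneg : -(1/s) ≤ 0 := neg_nonpos.mpr (by positivity)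
  exact mul_nonpos_iff.mpr (Or.inr ⟨hneg, hnn⟩)
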